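/- Let φ : X → X be a bijection that admits a square root ψ (ψ² = φ). If the set of 2k-cycles of φ is finite, then its cardinality is even. In particular, a bijection with exactly one 2k-cycle has no square root. -/

import Mathlib

/-- The set of 2k-cycles of a bijection φ: orbits of points of exact φ-period 2k. -/
def cycles2k {X : Type*} (φ : Equiv.Perm X) (k : ℕ) : Set (Set X) :=
  {s | ∃ x : X, (φ ^ (2 * k)) x = x ∧
      (∀ j : ℕ, 1 ≤ j → j < 2 * k → (φ ^ j) x ≠ x) ∧
      s = {y | ∃ j : ℕ, j < 2 * k ∧ y = (φ ^ j) x}}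

section aux

variable {X : Type*}

private lemma sq_comm {φ ψ : Equiv.Perm X} (hsq : ψ * ψ = φ) (j : ℕ) (x : X) :
    ψ ((φ ^ j) x) = (φ ^ j) (ψ x) := by
  have hc : Commute ψ (φ ^ j) := by
    subst hsq
    exact ((Commute.refl ψ).mul_right (Commute.refl ψ)).pow_right j
  have := congrArg (fun (e : Equiv.Perm X) => e x) hc.eq
  simpa [Equiv.Perm.mul_apply] using this

private lemma period_dvd {φ : Equiv.Perm X} {k : ℕ} (hk : 1 ≤ k) {x : X}
    (h2k : (φ ^ (2 * k)) x = x) (hmin : ∀ j : ℕ, 1 ≤ j → j < 2 * k → (φ ^ j) x ≠ x)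
    {n : ℕ} (hn : (φ ^ n) x = x) : 2 * k ∣ n := by
  induction n using Nat.strong_induction_on with
  | _ n ih =>
    by_cases h : n < 2 * k
    · rcases Nat.eq_zero_or_pos n with rfl | hpos
      · exact dvd_zero _
      · exact absurd hn (hmin n hpos h)
    · push_neg at h
      have heq : (φ ^ (n - 2 * k)) x = x := by
        have hpow : φ ^ n = φ ^ (n - 2 * k) * φ ^ (2 * k) := by
          rw [← pow_add]; congr 1; omega
        rw [hpow, Equiv.Perm.mul_apply, h2k] at hn
        exact hn
      obtain ⟨c, hc⟩ := ih (n - 2 * k) (by omega) heq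
      exact ⟨c + 1, by rw [Nat.mul_add, ← hc, Nat.mul_one]; omega⟩

private lemma even_ncard_of_fpf_involution {α : Type*} :
    ∀ n (s : Set α), s.ncard = n → s.Finite →
      ∀ g : α → α, (∀ x ∈ s, g x ∈ s) → (∀ x ∈ s, g (g x) = x) →
        (∀ x ∈ s, g x ≠ x) → Even n := by
  intro n
  induction n using Nat.strong_induction_on with
  | _ n ih =>
    intro s hcard hfin g hmap hinv hfpf
    rcases s.eq_empty_or_nonempty with rfl | ⟨a, ha⟩
    · rw [Set.ncard_empty] at hcard
      exact hcard ▸ Even.zero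
    · have hga : g a ∈ s := hmap a ha
      have hne : g a ≠ a := hfpf a ha
      set t := s \ {a, g a} with ht
      have hsub : ({a, g a} : Set α) ⊆ s := by
        intro y hy; rcases hy with rfl | rfl; exacts [ha, hga]
      have hpair : ({a, g a} : Set α).ncard = 2 := Set.ncard_pair (Ne.symm hne)
      have htfin : t.Finite := hfin.diff
      have hdiff : t.ncard + 2 = n := by
        rw [← hpair, ← hcard]
        exact Set.ncard_diff_add_ncard_of_subset hsub hfin
    -- show n ≥ 2
      have hn2 : 2 ≤ n := by omega
      have htmap : ∀ x ∈ t, g x ∈ t := by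
        rintro x ⟨hxs, hx⟩
        simp only [Set.mem_insert_iff, Set.mem_singleton_iff, not_or] at hx
        refine ⟨hmap x hxs, ?_⟩
        simp only [Set.mem_insert_iff, Set.mem_singleton_iff, not_or]
        constructor
        · intro hgx
          exact hx.2 (by rw [← hinv x hxs, hgx])
        · intro hgx
          exact hx.1 (by rw [← hinv x hxs, hgx, hinv a ha])
      obtain ⟨r, hr⟩ := ih (n - 2) (by omega) t (by omega) htfin g htmap
        (fun x hx => hinv x hx.1) (fun x hx => hfpf x hx.1)
      exact ⟨r + 1, by omega⟩

end aux

/-- If φ admits a square root, then its (finite) set of 2k-cycles has even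
cardinality; in particular the number of 2k-cycles is never exactly one. -/
theorem stmt_5 {X : Type*} (k : ℕ) (hk : 1 ≤ k) (φ ψ : Equiv.Perm X)
    (hsq : ψ * ψ = φ) :
    ((cycles2k φ k).Finite → Even (cycles2k φ k).ncard) ∧
      (cycles2k φ k).ncard ≠ 1 := by
  classical
  have hcomm : ∀ (j : ℕ) (x : X), ψ ((φ ^ j) x) = (φ ^ j) (ψ x) := sq_comm hsq
  -- ψ maps 2k-cycles to 2k-cycles
  have hmap : ∀ s ∈ cycles2k φ k, ψ '' s ∈ cycles2k φ k := by
    rintro s ⟨x, h2k, hmin, rfl⟩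
    refine ⟨ψ x, ?_, ?_, ?_⟩
    · rw [← hcomm, h2k]
    · intro j hj1 hj2 h
      rw [← hcomm] at h
      exact hmin j hj1 hj2 (ψ.injective h)
    · ext y
      simp only [Set.mem_image, Set.mem_setOf_eq]
      constructor
      · rintro ⟨z, ⟨j, hj, rfl⟩, rfl⟩
        exact ⟨j, hj, hcomm j x⟩
      · rintro ⟨j, hj, rfl⟩
        exact ⟨(φ ^ j) x, ⟨j, hj, rfl⟩, hcomm j x⟩
  -- each 2k-cycle is φ-invariant
  have hphi : ∀ s ∈ cycles2k φ k, φ '' s = s := by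
    rintro s ⟨x, h2k, hmin, rfl⟩
    ext y
    simp only [Set.mem_image, Set.mem_setOf_eq]
    constructor
    · rintro ⟨z, ⟨j, hj, rfl⟩, rfl⟩
      by_cases hj1 : j + 1 < 2 * k
      · exact ⟨j + 1, hj1, by rw [pow_succ', Equiv.Perm.mul_apply]⟩
      · have hje : j + 1 = 2 * k := by omega
        refine ⟨0, by omega, ?_⟩
        have : φ ^ (2 * k) = φ ^ j * φ := by rw [← hje, pow_succ]
        rw [this, Equiv.Perm.mul_apply] at h2k
        -- goal: φ ((φ^j) x) = (φ^0) x
        rw [pow_zero]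
        have hc : φ ((φ ^ j) x) = (φ ^ j) (φ x) := by
          have : φ * φ ^ j = φ ^ j * φ := (Commute.refl φ).pow_right j |>.eq
          have := congrArg (fun (e : Equiv.Perm X) => e x) this
          simpa [Equiv.Perm.mul_apply] using this
        rw [hc, h2k]
        rfl
    · rintro ⟨j, hj, rfl⟩
      rcases Nat.eq_zero_or_pos j with rfl | hjpos
      · refine ⟨(φ ^ (2 * k - 1)) x, ⟨2 * k - 1, by omega, rfl⟩, ?_⟩
        have : φ ^ (2 * k) = φ * φ ^ (2 * k - 1) := by
          rw [← pow_succ']; congr 1; omega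
        rw [this, Equiv.Perm.mul_apply] at h2k
        rw [h2k, pow_zero]
        rfl
      · refine ⟨(φ ^ (j - 1)) x, ⟨j - 1, by omega, rfl⟩, ?_⟩
        have : φ ^ j = φ * φ ^ (j - 1) := by
          rw [← pow_succ']; congr 1; omega
        rw [this, Equiv.Perm.mul_apply]
  -- image by ψ is an involution on 2k-cycles
  have hinv : ∀ s ∈ cycles2k φ k, ψ '' (ψ '' s) = s := by
    intro s hs
    rw [← Set.image_comp]
    have hco : (⇑ψ ∘ ⇑ψ) = ⇑φ := by rw [← hsq]; rfl
    rw [hco]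
    exact hphi s hs
  -- fixed point freeness
  have hfpf : ∀ s ∈ cycles2k φ k, ψ '' s ≠ s := by
    rintro s ⟨x, h2k, hmin, rfl⟩ hfix
    have hx : x ∈ {y | ∃ j : ℕ, j < 2 * k ∧ y = (φ ^ j) x} :=
      ⟨0, by omega, by rw [pow_zero]; rfl⟩
    have hpsix : ψ x ∈ {y | ∃ j : ℕ, j < 2 * k ∧ y = (φ ^ j) x} := by
      rw [← hfix]; exact ⟨x, hx, rfl⟩
    obtain ⟨a, ha, hax⟩ := hpsix
    have hphix : φ x = (φ ^ (a + a)) x := by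
      have h1 : φ x = ψ (ψ x) := by
        rw [← hsq]; rfl
      rw [h1, hax, hcomm, hax, ← Equiv.Perm.mul_apply, ← pow_add]
    rcases Nat.eq_zero_or_pos a with rfl | hapos
    · simp only [Nat.add_zero, pow_zero] at hphix
      exact hmin 1 le_rfl (by omega) (by rw [pow_one]; exact hphix.symm ▸ hphix)
    · have hsplit : φ ^ (a + a) = φ * φ ^ (a + a - 1) := by
        rw [← pow_succ']; congr 1; omega
      rw [hsplit, Equiv.Perm.mul_apply] at hphix
      have hper : (φ ^ (a + a - 1)) x = x := φ.injective hphix.symm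
      obtain ⟨c, hc⟩ := period_dvd hk h2k hmin hper
      have h2d : 2 ∣ a + a - 1 := ⟨k * c, by rw [hc]; ring⟩
      omega
  constructor
  · intro hfin
    exact even_ncard_of_fpf_involution _ _ rfl hfin (Set.image ψ) hmap
      (fun s hs => hinv s hs) (fun s hs => hfpf s hs)
  · by_cases hfin : (cycles2k φ k).Finite
    · intro h1
      obtain ⟨m, hm⟩ := even_ncard_of_fpf_involution _ _ rfl hfin (Set.image ψ) hmap
        (fun s hs => hinv s hs) (fun s hs => hfpf s hs)
      omega
    · rw [Set.Infinite.ncard hfin]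
      omega
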